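/- Let 1 ≤ n ≤ k be integers. A polynomial P on ℝ^n is invariant under the hyperoctahedral group H_n if and only if there exists a polynomial Q on ℝ^k invariant under the hyperoctahedral group H_k such that Q(0_{k−n}, x) = P(x) for all x ∈ ℝ^n. In particular, the restriction map Q ↦ Q(0_{k−n}, ·) carries the algebra of H_k-invariant polynomials on ℝ^k onto the algebra of H_n-invariant polynomials on ℝ^n. -/

import Mathlib

open MvPolynomial


/-- The padding map `ℝ^n → ℝ^k`, `x ↦ (0_{k-n}, x)`. -/
def padk (k n : ℕ) (x : Fin n → ℝ) : Fin k → ℝ :=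
  fun j => if h : (j : ℕ) < k - n then 0
    else x ⟨(j : ℕ) - (k - n), by have := j.isLt; omega⟩

/-- `P` is invariant under the hyperoctahedral group `H_m` of signed
permutations `x ↦ (ε_j x_{σ(j)})_j`. -/
def HInv (m : ℕ) (P : MvPolynomial (Fin m) ℝ) : Prop :=
  ∀ (σ : Equiv.Perm (Fin m)) (ε : Fin m → ℝ), (∀ j, ε j = 1 ∨ ε j = -1) →
    ∀ x : Fin m → ℝ,
      MvPolynomial.eval (fun j => ε j * x (σ j)) P = MvPolynomial.eval x P

lemma eval_aeval' {σ τ : Type*} (x : τ → ℝ) (g : σ → MvPolynomial τ ℝ) (p : MvPolynomial σ ℝ) :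
    eval x (aeval g p) = eval (fun i => eval x (g i)) p := by
  induction p using MvPolynomial.induction_on with
  | C a => simp
  | add p q hp hq => simp only [map_add, hp, hq]
  | mul_X p i hp => simp only [map_mul, aeval_X, eval_mul, eval_X, hp]

lemma aeval_eq_eval' {σ : Type*} (f : σ → ℝ) (p : MvPolynomial σ ℝ) :
    aeval f p = eval f p := by
  rw [aeval_def, Algebra.algebraMap_self]; rfl

lemma eval_expand_two {σ : Type*} (x : σ → ℝ) (p : MvPolynomial σ ℝ) :
    eval x (expand 2 p) = eval (fun i => x i ^ 2) p := by
  induction p using MvPolynomial.induction_on with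
  | C a => simp
  | add p q hp hq => simp only [map_add, eval_add, hp, hq]
  | mul_X p i hp => simp only [map_mul, expand_X, eval_mul, eval_pow, eval_X, hp]

noncomputable def dbl {m : ℕ} (t : Fin m →₀ ℕ) : Fin m →₀ ℕ := t.mapRange (2 * ·) rfl

lemma dbl_apply {m : ℕ} (t : Fin m →₀ ℕ) (j : Fin m) : dbl t j = 2 * t j := rfl

lemma dbl_injective {m : ℕ} : Function.Injective (dbl (m := m)) :=
  Finsupp.mapRange_injective _ rfl (fun a b h => by omega)

lemma expand_two_monomial {m : ℕ} (t : Fin m →₀ ℕ) (c : ℝ) :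
    expand 2 (monomial t c) = monomial (dbl t) c := by
  rw [monomial_eq, monomial_eq, map_mul, expand_C]
  congr 1
  rw [dbl, Finsupp.prod_mapRange_index (by simp)]
  rw [map_finsuppProd]
  exact Finsupp.prod_congr fun i _ => by rw [map_pow, expand_X, ← pow_mul]

lemma coeff_expand_two {m : ℕ} (s : Fin m →₀ ℕ) (p : MvPolynomial (Fin m) ℝ) :
    coeff (dbl s) (expand 2 p) = coeff s p := by
  conv_lhs => rw [p.as_sum]
  rw [map_sum]
  simp_rw [expand_two_monomial]
  rw [coeff_sum]
  simp_rw [coeff_monomial, dbl_injective.eq_iff]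
  rw [Finset.sum_ite_eq' p.support s (fun t => coeff t p)]
  split
  · rfl
  · exact (notMem_support_iff.mp (by assumption)).symm

lemma expand_two_injective {m : ℕ} :
    Function.Injective (expand 2 : MvPolynomial (Fin m) ℝ →ₐ[ℝ] MvPolynomial (Fin m) ℝ) := by
  intro p q h
  ext s
  rw [← coeff_expand_two, h, coeff_expand_two]

noncomputable def negv {m : ℕ} (j : Fin m) : MvPolynomial (Fin m) ℝ →ₐ[ℝ] MvPolynomial (Fin m) ℝ :=
  aeval (fun i => if i = j then -X i else X i)

lemma negv_monomial {m : ℕ} (j : Fin m) (d : Fin m →₀ ℕ) (c : ℝ) :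
    negv j (monomial d c) = monomial d ((-1 : ℝ) ^ (d j) * c) := by
  rw [monomial_eq, monomial_eq, negv, map_mul, aeval_C]
  rw [map_finsuppProd]
  have h1 : ∀ i ∈ d.support,
      aeval (fun i => if i = j then -X i else X i) ((X i : MvPolynomial (Fin m) ℝ) ^ d i)
        = (if i = j then ((-1 : MvPolynomial (Fin m) ℝ)) ^ d i else 1) * X i ^ d i := by
    intro i _
    rw [map_pow, aeval_X]
    split
    · rw [neg_pow]
    · rw [one_mul]
  rw [Finsupp.prod_congr (g2 := fun i e => (if i = j then ((-1 : MvPolynomial (Fin m) ℝ)) ^ e else 1) * X i ^ e) h1,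
    Finsupp.prod, Finset.prod_mul_distrib]
  rw [Finset.prod_ite_eq' d.support j (fun i => ((-1 : MvPolynomial (Fin m) ℝ)) ^ d i)]
  have h2 : (if j ∈ d.support then ((-1 : MvPolynomial (Fin m) ℝ)) ^ d j else 1)
      = ((-1 : MvPolynomial (Fin m) ℝ)) ^ d j := by
    split
    · rfl
    · rw [Finsupp.notMem_support_iff.mp (by assumption), pow_zero]
  rw [h2, algebraMap_eq, map_mul, map_pow, map_neg, map_one, Finsupp.prod]
  ring

lemma coeff_negv {m : ℕ} (j : Fin m) (d : Fin m →₀ ℕ) (p : MvPolynomial (Fin m) ℝ) :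
    coeff d (negv j p) = (-1 : ℝ) ^ (d j) * coeff d p := by
  conv_lhs => rw [p.as_sum]
  rw [map_sum]
  simp_rw [negv_monomial]
  rw [coeff_sum]
  simp_rw [coeff_monomial]
  rw [Finset.sum_ite_eq' p.support d (fun t => (-1 : ℝ) ^ (t j) * coeff t p)]
  split
  · rfl
  · rw [notMem_support_iff.mp (by assumption), mul_zero]

lemma even_of_hinv {m : ℕ} {p : MvPolynomial (Fin m) ℝ} (h : HInv m p)
    (d : Fin m →₀ ℕ) (hd : d ∈ p.support) (j : Fin m) : 2 ∣ d j := by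
  have hnp : negv j p = p := by
    apply MvPolynomial.funext
    intro x
    rw [negv, eval_aeval']
    have := h 1 (fun i => if i = j then -1 else 1)
      (fun i => by by_cases hij : i = j <;> simp [hij]) x
    simp only [Equiv.Perm.coe_one, id_eq] at this
    have harg : (fun i => eval x (if i = j then -X i else (X i : MvPolynomial (Fin m) ℝ)))
        = fun i => (if i = j then (-1 : ℝ) else 1) * x i := by
      funext i; by_cases hij : i = j <;> simp [hij]
    rw [harg]
    exact this
  have := coeff_negv j d p
  rw [hnp] at this
  rcases Nat.even_or_odd (d j) with he | ho
  · exact he.two_dvd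
  · rw [ho.neg_one_pow] at this
    have hc : coeff d p = 0 := by linarith
    exact absurd hc (mem_support_iff.mp hd)

noncomputable def hlf {m : ℕ} (t : Fin m →₀ ℕ) : Fin m →₀ ℕ := t.mapRange (· / 2) (Nat.zero_div 2)

lemma exists_sqrt {m : ℕ} {p : MvPolynomial (Fin m) ℝ} (h : HInv m p) :
    ∃ R : MvPolynomial (Fin m) ℝ, expand 2 R = p := by
  refine ⟨∑ d ∈ p.support, monomial (hlf d) (coeff d p), ?_⟩
  rw [map_sum]
  simp_rw [expand_two_monomial]
  have key : ∀ d ∈ p.support, monomial (dbl (hlf d)) (coeff d p) = monomial d (coeff d p) := by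
    intro d hd
    have hde : dbl (hlf d) = d := by
      ext j
      rw [dbl_apply]
      have h2 : (2 : ℕ) ∣ d j := even_of_hinv h d hd j
      show 2 * (d j / 2) = d j
      omega
    rw [hde]
  rw [Finset.sum_congr rfl key]
  exact p.support_sum_monomial_coeff

lemma symm_of_hinv {m : ℕ} {p : MvPolynomial (Fin m) ℝ} (h : HInv m p) : p.IsSymmetric := by
  intro e
  apply MvPolynomial.funext
  intro x
  rw [eval_rename]
  have := h e 1 (fun j => Or.inl rfl) x
  simpa [Function.comp_def] using this

lemma esymm_cons_zero (M : Multiset ℝ) (i : ℕ) : (0 ::ₘ M).esymm i = M.esymm i := by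
  cases i with
  | zero => simp [Multiset.esymm]
  | succ j =>
      rw [Multiset.esymm, Multiset.powersetCard_cons, Multiset.map_add, Multiset.sum_add,
        Multiset.map_map]
      simp [Multiset.esymm, Function.comp_def]

lemma esymm_replicate_zero_add (m : ℕ) (M : Multiset ℝ) (i : ℕ) :
    (Multiset.replicate m 0 + M).esymm i = M.esymm i := by
  induction m with
  | zero => simp
  | succ m ih =>
      rw [Multiset.replicate_succ, Multiset.cons_add, esymm_cons_zero]
      exact ih

lemma eval_esymm_eq_multiset {m : ℕ} (f : Fin m → ℝ) (i : ℕ) :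
    MvPolynomial.eval f (esymm (Fin m) ℝ i) = ((Finset.univ.val.map f)).esymm i := by
  rw [← aeval_eq_eval', aeval_esymm_eq_multiset_esymm]

lemma eval_padk_esymm {n k : ℕ} (hnk : n ≤ k) (z : Fin n → ℝ) (i : ℕ) :
    MvPolynomial.eval (padk k n z) (esymm (Fin k) ℝ i) = MvPolynomial.eval z (esymm (Fin n) ℝ i) := by
  rw [eval_esymm_eq_multiset, eval_esymm_eq_multiset]
  have hkn : (k - n) + n = k := by omega
  let E : (Fin (k - n) ⊕ Fin n) ≃ Fin k := finSumFinEquiv.trans (finCongr hkn)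
  have hEl : ∀ a : Fin (k - n), padk k n z (E (Sum.inl a)) = 0 := by
    intro a
    have hv : ((E (Sum.inl a) : Fin k) : ℕ) = (a : ℕ) := by
      simp [E, finSumFinEquiv_apply_left]
    rw [padk]
    rw [dif_pos (by rw [hv]; exact a.isLt)]
  have hEr : ∀ b : Fin n, padk k n z (E (Sum.inr b)) = z b := by
    intro b
    have hv : ((E (Sum.inr b) : Fin k) : ℕ) = (k - n) + (b : ℕ) := by
      simp [E, finSumFinEquiv_apply_right]
    rw [padk]
    rw [dif_neg (by omega)]
    congr 1
    ext
    simp [hv]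
  have huniv : (Finset.univ : Finset (Fin k)) = Finset.univ.map E.toEmbedding :=
    (Finset.map_univ_equiv E).symm
  rw [huniv, Finset.map_val, Multiset.map_map]
  have huniv2 : (Finset.univ : Finset (Fin (k - n) ⊕ Fin n)).val
      = Multiset.map Sum.inl (Finset.univ : Finset (Fin (k - n))).val
        + Multiset.map Sum.inr (Finset.univ : Finset (Fin n)).val := rfl
  rw [huniv2, Multiset.map_add, Multiset.map_map, Multiset.map_map]
  have hl : Multiset.map ((padk k n z ∘ E.toEmbedding) ∘ Sum.inl) (Finset.univ : Finset (Fin (k - n))).val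
      = Multiset.replicate (k - n) 0 := by
    have : ((padk k n z ∘ E.toEmbedding) ∘ Sum.inl) = fun _ => (0 : ℝ) := by
      funext a; exact hEl a
    rw [this, Multiset.map_const']
    simp
  have hr : Multiset.map ((padk k n z ∘ E.toEmbedding) ∘ Sum.inr) (Finset.univ : Finset (Fin n)).val
      = Multiset.map z (Finset.univ : Finset (Fin n)).val := by
    congr 1
    funext b; exact hEr b
  rw [hl, hr, esymm_replicate_zero_add]

lemma padk_at0 {k n : ℕ} (x : Fin n → ℝ) (j : Fin k) (hb : (j : ℕ) < k - n) :
    padk k n x j = 0 := by rw [padk, dif_pos hb]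

lemma padk_at {k n : ℕ} (x : Fin n → ℝ) (j : Fin k) (b : Fin n)
    (hb : (j : ℕ) = (k - n) + (b : ℕ)) : padk k n x j = x b := by
  rw [padk, dif_neg (by omega)]
  congr 1
  ext
  simp [hb]

lemma eval_padk_aeval_esymm {n k : ℕ} (hnk : n ≤ k) (Φ : MvPolynomial (Fin n) ℝ)
    (z : Fin n → ℝ) :
      MvPolynomial.eval (padk k n z)
        (aeval (fun i : Fin n => esymm (Fin k) ℝ ((i : ℕ) + 1)) Φ)
          = MvPolynomial.eval z
        (aeval (fun i : Fin n => esymm (Fin n) ℝ ((i : ℕ) + 1)) Φ) := by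
  rw [eval_aeval', eval_aeval']
  have harg : (fun i : Fin n =>
        MvPolynomial.eval (padk k n z) (esymm (Fin k) ℝ ((i : ℕ) + 1)))
      = fun i : Fin n =>
        MvPolynomial.eval z (esymm (Fin n) ℝ ((i : ℕ) + 1)) := by
    funext i
    exact eval_padk_esymm hnk _ _
  rw [harg]

set_option maxHeartbeats 1000000

/-- a polynomial `P` on `ℝ^n` is `H_n`-invariant iff there is an
`H_k`-invariant polynomial `Q` on `ℝ^k` with `Q(0_{k-n}, x) = P(x)` for all `x`;
i.e. restriction maps the `H_k`-invariant polynomials onto the `H_n`-invariant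
polynomials. -/
theorem stmt_3 (n k : ℕ) (hn : 1 ≤ n) (hnk : n ≤ k) (P : MvPolynomial (Fin n) ℝ) :
    HInv n P ↔
      ∃ Q : MvPolynomial (Fin k) ℝ, HInv k Q ∧
        ∀ x : Fin n → ℝ,
          MvPolynomial.eval (padk k n x) Q = MvPolynomial.eval x P := by
  constructor
  · intro h
    obtain ⟨R, hR⟩ := exists_sqrt h
    have hPsym : P.IsSymmetric := symm_of_hinv h
    have hRsym : R.IsSymmetric := by
      intro e
      apply expand_two_injective
      show expand 2 (rename e R) = expand 2 R
      rw [← rename_expand, hR, hPsym e]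
    obtain ⟨Φ, hΦ⟩ := esymmAlgHom_surjective (σ := Fin n) (R := ℝ) (n := n)
      (by simp) ⟨R, (MvPolynomial.mem_symmetricSubalgebra R).mpr hRsym⟩
    have hΦR : aeval (fun i : Fin n => esymm (Fin n) ℝ ((i : ℕ) + 1)) Φ = R := by
      have := congrArg Subtype.val hΦ
      rwa [esymmAlgHom_apply] at this
    set S : MvPolynomial (Fin k) ℝ :=
      aeval (fun i : Fin n => esymm (Fin k) ℝ ((i : ℕ) + 1)) Φ with hSdef
    have hSsym : S.IsSymmetric := by
      intro e
      show (rename e : MvPolynomial (Fin k) ℝ →ₐ[ℝ] MvPolynomial (Fin k) ℝ) (aeval _ Φ) = _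
      rw [← AlgHom.comp_apply, comp_aeval]
      simp_rw [rename_esymm]
      rfl
    refine ⟨expand 2 S, ?_, ?_⟩
    · intro σ ε hε x
      rw [eval_expand_two, eval_expand_two]
      have h1 : (fun j => (ε j * x (σ j)) ^ 2) = (fun j => x j ^ 2) ∘ σ := by
        funext j
        rcases hε j with hj | hj <;> · rw [Function.comp_apply, hj]; ring
      rw [h1, ← eval_rename, hSsym σ]
    · intro x
      rw [eval_expand_two]
      have hpad : (fun j => padk k n x j ^ 2) = padk k n (fun i => x i ^ 2) := by
        funext j
        simp only [padk]
        split
        · exact zero_pow two_ne_zero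
        · rfl
      rw [hpad]
      have hS : MvPolynomial.eval (padk k n (fun i => x i ^ 2)) S
          = MvPolynomial.eval (fun i => x i ^ 2) R := by
        rw [hSdef, eval_padk_aeval_esymm hnk, hΦR]
      rw [hS, ← hR, eval_expand_two]
  · rintro ⟨Q, hQ, hrest⟩
    intro σ ε hε x
    have hkn : (k - n) + n = k := by omega
    let E : (Fin (k - n) ⊕ Fin n) ≃ Fin k := finSumFinEquiv.trans (finCongr hkn)
    have hEl_val : ∀ a : Fin (k - n), ((E (Sum.inl a)) : ℕ) = (a : ℕ) := by
      intro a; simp [E, finSumFinEquiv_apply_left]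
    have hEr_val : ∀ b : Fin n, ((E (Sum.inr b)) : ℕ) = (k - n) + (b : ℕ) := by
      intro b; simp [E, finSumFinEquiv_apply_right]
    let σ' : Equiv.Perm (Fin k) := E.permCongr (Equiv.sumCongr (Equiv.refl _) σ)
    let ε' : Fin k → ℝ := fun j => if h : (j : ℕ) < k - n then 1
      else ε ⟨(j : ℕ) - (k - n), by have := j.isLt; omega⟩
    have hε' : ∀ j, ε' j = 1 ∨ ε' j = -1 := by
      intro j
      by_cases hj : (j : ℕ) < k - n
      · left; simp [ε', hj]
      · simp only [ε', dif_neg hj]; exact hε _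
    have key : (fun j => ε' j * padk k n x (σ' j)) = padk k n (fun i => ε i * x (σ i)) := by
      funext j
      rcases hsymm : E.symm j with a | b
      · have hj : j = E (Sum.inl a) := by rw [← hsymm, Equiv.apply_symm_apply]
        have hσ' : σ' j = E (Sum.inl a) := by
          simp only [σ', Equiv.permCongr_apply, hsymm, Equiv.sumCongr_apply, Sum.map_inl,
            Equiv.refl_apply]
        rw [hσ', padk_at0 x _ (by rw [hEl_val]; exact a.isLt), mul_zero, hj,
          padk_at0 _ _ (by rw [hEl_val]; exact a.isLt)]
      · have hj : j = E (Sum.inr b) := by rw [← hsymm, Equiv.apply_symm_apply]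
        have hε'j : ε' j = ε b := by
          rw [hj]
          simp only [ε', dif_neg (by rw [hEr_val]; omega : ¬ ((E (Sum.inr b)) : ℕ) < k - n)]
          congr 1
          ext
          simp [hEr_val]
        have hσ' : σ' j = E (Sum.inr (σ b)) := by
          simp only [σ', Equiv.permCongr_apply, hsymm, Equiv.sumCongr_apply, Sum.map_inr,
            Equiv.refl_apply]
        rw [hε'j, hσ', padk_at x _ (σ b) (by rw [hEr_val]), hj,
          padk_at _ _ b (by rw [hEr_val])]
    rw [← hrest, ← hrest, ← key]
    exact hQ σ' ε' hε' (padk k n x)
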